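/- arXiv:2205.03118 — 2 statements merged into one kernel-verified Lean document; each statement's English description precedes it below -/
import Mathlib

section
/- Bounded rotated cost implies weak turnpike counting bound: suppose α̲ ∈ 𝒦_∞, C > 0, N ≥ 1, and d : {0,...,N-1} → [0,∞) satisfies ∑_{k=0}^{N-1} ((N-k)/N)·α̲(d(k)) ≤ C. Then for every ε > 0, the number Q_ε of indices k with d(k) ≤ ε satisfies Q_ε ≥ N - √N / α(ε), where α(ε) = √(α̲(ε))/√(2C). -/
/-- A class `𝒦_∞` function on `[0,∞)`. -/
def IsKInfty (α : ℝ → ℝ) : Prop :=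
  ContinuousOn α (Set.Ici 0) ∧ StrictMonoOn α (Set.Ici 0) ∧ α 0 = 0 ∧
    ∀ M : ℝ, ∃ x, 0 ≤ x ∧ M ≤ α x

lemma sum_distinct_pos_nat_lb (T : Finset ℕ) (h : ∀ x ∈ T, 1 ≤ x) :
    T.card * (T.card + 1) ≤ 2 * ∑ x ∈ T, x := by
  induction T using Finset.strongInduction with
  | _ T ih =>
    rcases T.eq_empty_or_nonempty with rfl | hne
    · simp
    · set x := T.max' hne with hx
      have hxT : x ∈ T := T.max'_mem hne
      have hsub : T ⊆ Finset.Icc 1 x := fun y hy =>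
        Finset.mem_Icc.mpr ⟨h y hy, T.le_max' y hy⟩
      have hcard : T.card ≤ x := by
        have := Finset.card_le_card hsub
        simpa [Nat.card_Icc] using this
      have ih' := ih (T.erase x) (Finset.erase_ssubset hxT)
        (fun y hy => h y (Finset.mem_of_mem_erase hy))
      have hce : (T.erase x).card = T.card - 1 := Finset.card_erase_of_mem hxT
      have hsumsplit : ∑ y ∈ T, y = x + ∑ y ∈ T.erase x, y := by
        simpa using (Finset.add_sum_erase T id hxT).symm
      obtain ⟨c, hc⟩ : ∃ c, T.card = c + 1 :=
        ⟨T.card - 1, (Nat.succ_pred_eq_of_pos (Finset.card_pos.mpr hne)).symm⟩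
      rw [hc] at hcard ⊢
      rw [hce, hc] at ih'
      simp only [Nat.add_sub_cancel] at ih'
      rw [hsumsplit]
      nlinarith

theorem bounded_rotated_cost_implies_weak_turnpike
    (alphaLow : ℝ → ℝ) (hα : IsKInfty alphaLow)
    (C : ℝ) (hC : 0 < C) (N : ℕ) (hN : 1 ≤ N)
    (d : Fin N → ℝ) (hd : ∀ k, 0 ≤ d k)
    (hsum : ∑ k : Fin N, (((N : ℝ) - (k : ℕ)) / N) * alphaLow (d k) ≤ C) :
    ∀ ε : ℝ, 0 < ε →
      (N : ℝ) - Real.sqrt N / (Real.sqrt (alphaLow ε) / Real.sqrt (2 * C)) ≤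
        ((Finset.univ.filter (fun k : Fin N => d k ≤ ε)).card : ℝ) := by
  intro ε hε
  obtain ⟨hcont, hmono, h0, hunb⟩ := hα
  have hNpos : (0:ℝ) < N := by exact_mod_cast hN
  have hαε : 0 < alphaLow ε := by
    have := hmono (Set.self_mem_Ici) (Set.mem_Ici.mpr hε.le) hε
    linarith [h0 ▸ this]
  have hαnn : ∀ x : ℝ, 0 ≤ x → 0 ≤ alphaLow x := by
    intro x hx
    rcases eq_or_lt_of_le hx with rfl | hx'
    · exact le_of_eq h0.symm
    · have := hmono (Set.self_mem_Ici) (Set.mem_Ici.mpr hx) hx'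
      linarith [h0 ▸ this]
  set B : Finset (Fin N) := Finset.univ.filter (fun k => ¬ d k ≤ ε) with hB
  set G : Finset (Fin N) := Finset.univ.filter (fun k => d k ≤ ε) with hG
  have hcards : G.card + B.card = N := by
    rw [hG, hB]
    simpa using Finset.card_filter_add_card_filter_not
      (s := (Finset.univ : Finset (Fin N))) (p := fun k => d k ≤ ε)
  set m := B.card with hm
  -- key: alphaLow ε * (m^2 / (2*N)) ≤ C
  have hterm_nn : ∀ k : Fin N, 0 ≤ (((N : ℝ) - (k : ℕ)) / N) * alphaLow (d k) := by
    intro k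
    apply mul_nonneg
    · apply div_nonneg _ hNpos.le
      have : (k : ℕ) < N := k.isLt
      have : ((k:ℕ):ℝ) < N := by exact_mod_cast this
      linarith
    · exact hαnn _ (hd k)
  have hsumB : ∑ k ∈ B, (((N : ℝ) - (k : ℕ)) / N) * alphaLow (d k) ≤ C :=
    le_trans (Finset.sum_le_sum_of_subset_of_nonneg (Finset.subset_univ B)
      (fun k _ _ => hterm_nn k)) hsum
  have hlow : ∀ k ∈ B, (((N : ℝ) - (k : ℕ)) / N) * alphaLow ε ≤
      (((N : ℝ) - (k : ℕ)) / N) * alphaLow (d k) := by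
    intro k hk
    have hdk : ε < d k := by
      have := Finset.mem_filter.mp hk
      push_neg at this
      exact this.2
    have hαle : alphaLow ε ≤ alphaLow (d k) :=
      (hmono (Set.mem_Ici.mpr hε.le) (Set.mem_Ici.mpr (hd k)) hdk).le
    apply mul_le_mul_of_nonneg_left hαle
    apply div_nonneg _ hNpos.le
    have : ((k:ℕ):ℝ) < N := by exact_mod_cast k.isLt
    linarith
  have hsumB2 : ∑ k ∈ B, (((N : ℝ) - (k : ℕ)) / N) * alphaLow ε ≤ C :=
    le_trans (Finset.sum_le_sum hlow) hsumB
  -- combinatorial lower bound on the weight sum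
  have hwsum : (m : ℝ) * m ≤ 2 * ∑ k ∈ B, ((N : ℝ) - (k : ℕ)) := by
    have hcast : ∀ k ∈ B, ((N : ℝ) - (k : ℕ)) = ((N - (k:ℕ) : ℕ) : ℝ) := by
      intro k _
      rw [Nat.cast_sub k.isLt.le]
    rw [Finset.sum_congr rfl hcast]
    set T := B.image (fun k : Fin N => N - (k : ℕ)) with hT
    have hinj : Set.InjOn (fun k : Fin N => N - (k : ℕ)) B := by
      intro a _ b _ hab
      simp only at hab
      have ha := a.isLt; have hb := b.isLt
      ext; omega
    have hcardT : T.card = m := by rw [hT, Finset.card_image_of_injOn hinj]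
    have h1 : ∀ x ∈ T, 1 ≤ x := by
      intro x hx
      obtain ⟨k, _, rfl⟩ := Finset.mem_image.mp hx
      have := k.isLt; omega
    have key := sum_distinct_pos_nat_lb T h1
    rw [hcardT] at key
    have hsumeq : ∑ x ∈ T, x = ∑ k ∈ B, (N - (k:ℕ)) := Finset.sum_image hinj
    rw [hsumeq] at key
    have : (m * (m+1) : ℕ) ≤ (2 * ∑ k ∈ B, (N - (k:ℕ)) : ℕ) := key
    have hcast2 : ((2 * ∑ k ∈ B, (N - (k:ℕ)) : ℕ) : ℝ) = 2 * ∑ k ∈ B, ((N - (k:ℕ) : ℕ) : ℝ) := by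
      push_cast; ring
    calc (m:ℝ) * m ≤ ((m * (m+1) : ℕ) : ℝ) := by push_cast; nlinarith
      _ ≤ ((2 * ∑ k ∈ B, (N - (k:ℕ)) : ℕ) : ℝ) := by exact_mod_cast this
      _ = 2 * ∑ k ∈ B, ((N - (k:ℕ) : ℕ) : ℝ) := hcast2
  have hkey : (m : ℝ) * m * alphaLow ε ≤ 2 * N * C := by
    have h1 : (∑ k ∈ B, ((N : ℝ) - (k : ℕ))) / N * alphaLow ε ≤ C := by
      have : ∑ k ∈ B, (((N : ℝ) - (k : ℕ)) / N) * alphaLow ε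
          = (∑ k ∈ B, ((N : ℝ) - (k : ℕ))) / N * alphaLow ε := by
        rw [Finset.sum_div, Finset.sum_mul]
      linarith [this ▸ hsumB2]
    have h2 : (∑ k ∈ B, ((N : ℝ) - (k : ℕ))) * alphaLow ε ≤ N * C := by
      have := mul_le_mul_of_nonneg_right h1 hNpos.le
      calc (∑ k ∈ B, ((N : ℝ) - (k : ℕ))) * alphaLow ε
          = (∑ k ∈ B, ((N : ℝ) - (k : ℕ))) / N * alphaLow ε * N := by
            field_simp
        _ ≤ C * N := this
        _ = N * C := by ring
    nlinarith [hwsum, hαε.le]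
  -- conclude
  have hmle : (m : ℝ) ≤ Real.sqrt N * Real.sqrt (2*C) / Real.sqrt (alphaLow ε) := by
    have hmsq : (m:ℝ)^2 ≤ (N : ℝ) * (2*C) / alphaLow ε := by
      rw [le_div_iff₀ hαε]; nlinarith
    calc (m:ℝ) ≤ Real.sqrt ((N:ℝ) * (2*C) / alphaLow ε) := Real.le_sqrt_of_sq_le hmsq
      _ = Real.sqrt N * Real.sqrt (2*C) / Real.sqrt (alphaLow ε) := by
          rw [Real.sqrt_div (by positivity), Real.sqrt_mul (le_of_lt hNpos)]
  have hGcast : (G.card : ℝ) = (N : ℝ) - m := by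
    have : (G.card : ℝ) + m = N := by exact_mod_cast hcards
    linarith
  rw [hG] at hGcast
  rw [hGcast, div_div_eq_mul_div]
  linarith
end

section
/- Uniform bound from reachability: suppose ℓ is nonnegative and bounded above by ℓ_max on X × U, |λ| ≤ λ̄ on X, and the optimal orbit Π* (of period p* with average cost ℓ* ≥ 0) can be reached from x in M steps by a feasible input, after which one can follow the orbit. Then for all N ≥ 1, V_N^β(x) - ((N+1)/2)·ℓ* + λ(x) + λ̄ ≤ M·(ℓ_max - ℓ*) + 2λ̄ + ℓ*·p*. -/
/-- The trajectory of `x(k+1) = f(x(k), u(k))` starting at `x`. -/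
def traj {E F : Type*} (f : E → F → E) (x : E) (u : ℕ → F) : ℕ → E
  | 0 => x
  | k + 1 => f (traj f x u k) (u k)

/-- Feasible input sequences of horizon `N` starting at `x`. -/
def feas {E F : Type*} (X : Set E) (U : Set F) (f : E → F → E) (N : ℕ) (x : E) :
    Set (ℕ → F) :=
  {u | (∀ k < N, u k ∈ U) ∧ ∀ k ≤ N, traj f x u k ∈ X}

/-- Linearly discounted cost functional `J_N^β`. -/
noncomputable def Jdisc {E F : Type*} (f : E → F → E) (ℓ : E → F → ℝ)
    (N : ℕ) (x : E) (u : ℕ → F) : ℝ :=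
  ∑ k ∈ Finset.range N, (((N : ℝ) - k) / N) * ℓ (traj f x u k) (u k)

/-- Linearly discounted optimal value function `V_N^β`. -/
noncomputable def Vdisc {E F : Type*} (X : Set E) (U : Set F) (f : E → F → E)
    (ℓ : E → F → ℝ) (N : ℕ) (x : E) : ℝ :=
  sInf (Jdisc f ℓ N x '' feas X U f N x)

lemma traj_congr {E F : Type*} (f : E → F → E) (x : E) (u u' : ℕ → F) :
    ∀ k, (∀ i < k, u i = u' i) → traj f x u k = traj f x u' k := by
  intro k
  induction k with
  | zero => intro _; rfl
  | succ k ih =>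
    intro h
    simp only [traj, ih (fun i hi => h i (by omega)), h k (by omega)]

lemma window_sum (c : ℕ → ℝ) (p : ℕ) (hc : ∀ k, c (k + p) = c k) :
    ∀ a, ∑ i ∈ Finset.range p, c (a + i) = ∑ i ∈ Finset.range p, c i := by
  intro a
  induction a with
  | zero => simp
  | succ a ih =>
    have h1 : ∑ i ∈ Finset.range (p+1), c (a+i)
        = ∑ i ∈ Finset.range p, c (a+(i+1)) + c (a+0) :=
      Finset.sum_range_succ' _ p
    have h2 : ∑ i ∈ Finset.range (p+1), c (a+i)
        = ∑ i ∈ Finset.range p, c (a+i) + c (a+p) :=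
      Finset.sum_range_succ _ p
    have h3 : c (a+p) = c a := hc a
    have h4 : ∑ i ∈ Finset.range p, c (a+1+i) = ∑ i ∈ Finset.range p, c (a+(i+1)) :=
      Finset.sum_congr rfl (fun i _ => by rw [show a+1+i = a+(i+1) by omega])
    have := ih
    simp only [Nat.add_zero] at h1
    linarith

lemma key_bound (p : ℕ) (hp : 1 ≤ p) (L : ℝ) (hL : 0 ≤ L)
    (g : ℕ → ℝ) (hg0 : ∀ k, 0 ≤ g k) (hgp : ∀ k, g (k + p) = g k)
    (hsum0 : ∑ i ∈ Finset.range p, g i ≤ p * L)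
    (β : ℕ → ℝ) (hβ : ∀ i j, i ≤ j → β j ≤ β i) :
    ∀ n s, 0 ≤ β s → (∀ k, k < n → 0 ≤ β (s + k)) →
      ∑ k ∈ Finset.range n, β (s + k) * g k
        ≤ p * L * β s + L * ∑ k ∈ Finset.range n, β (s + k) := by
  intro n
  induction n using Nat.strong_induction_on with
  | _ n ih =>
    intro s hs hpos
    have hfirst : ∀ m, m ≤ p → ∑ k ∈ Finset.range m, β (s + k) * g k ≤ p * L * β s := by
      intro m hm
      have h1 : ∑ k ∈ Finset.range m, β (s + k) * g k
          ≤ ∑ k ∈ Finset.range m, β s * g k :=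
        Finset.sum_le_sum fun k _ =>
          mul_le_mul_of_nonneg_right (hβ s (s + k) (Nat.le_add_right _ _)) (hg0 k)
      have h2 : ∑ k ∈ Finset.range m, g k ≤ ∑ k ∈ Finset.range p, g k :=
        Finset.sum_le_sum_of_subset_of_nonneg
          (Finset.range_subset_range.2 hm) (fun k _ _ => hg0 k)
      have h3 : β s * ∑ k ∈ Finset.range m, g k ≤ β s * (p * L) :=
        mul_le_mul_of_nonneg_left (le_trans h2 hsum0) hs
      rw [← Finset.mul_sum] at h1
      nlinarith
    by_cases hnp : n ≤ p
    · have h4 : 0 ≤ L * ∑ k ∈ Finset.range n, β (s + k) :=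
        mul_nonneg hL (Finset.sum_nonneg fun k hk => hpos k (Finset.mem_range.1 hk))
      linarith [hfirst n hnp]
    · push_neg at hnp
      set m := n - p with hm
      have hn : n = p + m := by omega
      have hsplit : ∑ k ∈ Finset.range n, β (s + k) * g k
          = ∑ k ∈ Finset.range p, β (s + k) * g k
            + ∑ k ∈ Finset.range m, β (s + (p + k)) * g (p + k) := by
        rw [hn, Finset.sum_range_add]
      have hgshift : ∀ k, g (p + k) = g k := by
        intro k; rw [show p + k = k + p by omega]; exact hgp k
      have hB : ∑ k ∈ Finset.range m, β (s + (p + k)) * g (p + k)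
          = ∑ k ∈ Finset.range m, β ((s + p) + k) * g k :=
        Finset.sum_congr rfl fun k _ => by rw [hgshift, show s + (p+k) = (s+p)+k by omega]
      have hsp : 0 ≤ β (s + p) := hpos p hnp
      have hih := ih m (by omega) (s + p) hsp
        (fun k hk => by rw [show s + p + k = s + (p + k) by omega]; exact hpos (p+k) (by omega))
      have hC : p * L * β (s + p) ≤ L * ∑ k ∈ Finset.range p, β (s + k) := by
        have h5 : ∑ k ∈ Finset.range p, β (s + p) ≤ ∑ k ∈ Finset.range p, β (s + k) :=
          Finset.sum_le_sum fun k hk => hβ (s + k) (s + p)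
            (by have := Finset.mem_range.1 hk; omega)
        rw [Finset.sum_const, Finset.card_range, nsmul_eq_mul] at h5
        calc p * L * β (s + p) = L * ((p : ℝ) * β (s + p)) := by ring
          _ ≤ L * ∑ k ∈ Finset.range p, β (s + k) := mul_le_mul_of_nonneg_left h5 hL
      have hbsplit : ∑ k ∈ Finset.range n, β (s + k)
          = ∑ k ∈ Finset.range p, β (s + k)
            + ∑ k ∈ Finset.range m, β ((s + p) + k) := by
        rw [hn, Finset.sum_range_add]
        congr 1
        exact Finset.sum_congr rfl fun k _ => by rw [show s + (p+k) = (s+p)+k by omega]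
      rw [hsplit, hB, hbsplit]
      rw [hB] at *
      have hA := hfirst p le_rfl
      rw [mul_add]
      linarith

theorem uniform_bound_from_reachability {E F : Type*}
    (X : Set E) (U : Set F) (f : E → F → E) (ℓ : E → F → ℝ)
    (lam : E → ℝ) (ℓmax lamBar ℓstar : ℝ)
    (hℓ : ∀ x ∈ X, ∀ u ∈ U, 0 ≤ ℓ x u ∧ ℓ x u ≤ ℓmax)
    (hlam : ∀ x ∈ X, |lam x| ≤ lamBar)
    -- the optimal periodic orbit of period `p`
    (p : ℕ) (hp : 1 ≤ p) (PiX : ℕ → E) (PiU : ℕ → F)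
    (hPiper : ∀ k, PiX (k + p) = PiX k ∧ PiU (k + p) = PiU k)
    (hPifeas : ∀ k, PiX k ∈ X ∧ PiU k ∈ U)
    (hPidyn : ∀ k, PiX (k + 1) = f (PiX k) (PiU k))
    (hstar : ℓstar = (1 / (p : ℝ)) * ∑ k ∈ Finset.range p, ℓ (PiX k) (PiU k))
    (hstar0 : 0 ≤ ℓstar)
    -- the orbit is reachable from `x` in `M` steps
    (x : E) (hx : x ∈ X) (M : ℕ) (ubar : ℕ → F) (hubar : ubar ∈ feas X U f M x)
    (l : ℕ) (hreach : traj f x ubar M = PiX l) :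
    ∀ N : ℕ, 1 ≤ N →
      Vdisc X U f ℓ N x - (((N : ℝ) + 1) / 2) * ℓstar + lam x + lamBar ≤
        (M : ℝ) * (ℓmax - ℓstar) + 2 * lamBar + ℓstar * p := by
  intro N hN
  have hNpos : (0 : ℝ) < N := by exact_mod_cast hN
  have hppos : (0 : ℝ) < p := by exact_mod_cast hp
  set b : ℕ → ℝ := fun k => ((N : ℝ) - k) / N with hbdef
  have hb_mono : ∀ i j : ℕ, i ≤ j → b j ≤ b i := by
    intro i j hij
    have h : (i : ℝ) ≤ j := by exact_mod_cast hij
    exact (div_le_div_iff_of_pos_right hNpos).2 (by linarith)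
  have hb_le1 : ∀ k : ℕ, b k ≤ 1 := by
    intro k
    have h : (0 : ℝ) ≤ k := Nat.cast_nonneg k
    exact (div_le_one hNpos).2 (by linarith)
  have hb_nn : ∀ k : ℕ, k ≤ N → 0 ≤ b k := by
    intro k hk
    have h : (k : ℝ) ≤ N := by exact_mod_cast hk
    exact div_nonneg (by linarith) hNpos.le
  -- the candidate input
  set u : ℕ → F := fun k => if k < M then ubar k else PiU (l + (k - M)) with hudef
  have huU : ∀ k, u k ∈ U := by
    intro k
    by_cases h : k < M
    · simpa [hudef, h] using hubar.1 k h
    · simpa [hudef, h] using (hPifeas (l + (k - M))).2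
  have htraj_le : ∀ k, k ≤ M → traj f x u k = traj f x ubar k := by
    intro k hk
    exact traj_congr f x u ubar k (fun i hi => by simp [hudef, show i < M by omega])
  have htrajM : ∀ j, traj f x u (M + j) = PiX (l + j) := by
    intro j
    induction j with
    | zero => simpa using (htraj_le M le_rfl).trans hreach
    | succ j ih =>
      have hu : u (M + j) = PiU (l + j) := by simp [hudef]
      show f (traj f x u (M + j)) (u (M + j)) = PiX (l + (j + 1))
      rw [ih, hu, show l + (j + 1) = (l + j) + 1 by omega, hPidyn]
  have htrajX : ∀ k, traj f x u k ∈ X := by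
    intro k
    rcases le_or_gt k M with h | h
    · rw [htraj_le k h]; exact hubar.2 k h
    · rw [show k = M + (k - M) by omega, htrajM]; exact (hPifeas _).1
  have hufeas : u ∈ feas X U f N x := ⟨fun k _ => huU k, fun k _ => htrajX k⟩
  -- lower bound for the value set
  have hbdd : BddBelow (Jdisc f ℓ N x '' feas X U f N x) := by
    refine ⟨0, ?_⟩
    rintro y ⟨v, hv, rfl⟩
    apply Finset.sum_nonneg
    intro k hk
    have hkN := Finset.mem_range.1 hk
    exact mul_nonneg (hb_nn k hkN.le)
      (hℓ _ (hv.2 k hkN.le) _ (hv.1 k hkN)).1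
  have hV : Vdisc X U f ℓ N x ≤ Jdisc f ℓ N x u := by
    unfold Vdisc
    exact csInf_le hbdd (Set.mem_image_of_mem _ hufeas)
  -- orbit stage cost
  set c : ℕ → ℝ := fun k => ℓ (PiX k) (PiU k) with hcdef
  have hcp : ∀ k, c (k + p) = c k := by
    intro k; simp only [hcdef, (hPiper k).1, (hPiper k).2]
  have hc0 : ∀ k, 0 ≤ c k := fun k => (hℓ _ (hPifeas k).1 _ (hPifeas k).2).1
  have hcmax : ∀ k, c k ≤ ℓmax := fun k => (hℓ _ (hPifeas k).1 _ (hPifeas k).2).2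
  have hsum_c : ∑ i ∈ Finset.range p, c i = p * ℓstar := by
    rw [hstar]; field_simp
  have hstarmax : ℓstar ≤ ℓmax := by
    have h1 : ∑ i ∈ Finset.range p, c i ≤ ∑ i ∈ Finset.range p, ℓmax :=
      Finset.sum_le_sum fun i _ => hcmax i
    rw [Finset.sum_const, Finset.card_range, nsmul_eq_mul] at h1
    rw [hsum_c] at h1
    nlinarith
  set g : ℕ → ℝ := fun k => c (l + k) with hgdef
  have hg0 : ∀ k, 0 ≤ g k := fun k => hc0 _
  have hgp : ∀ k, g (k + p) = g k := by
    intro k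
    simp only [hgdef, show l + (k + p) = (l + k) + p by omega, hcp]
  have hgsum : ∑ i ∈ Finset.range p, g i ≤ p * ℓstar := by
    have := window_sum c p hcp l
    simp only [hgdef]
    rw [this, hsum_c]
  -- pointwise bound for the initial phase
  have hterm : ∀ k, k < N → b k * ℓ (traj f x u k) (u k) ≤ b k * ℓstar + (ℓmax - ℓstar) := by
    intro k hk
    obtain ⟨h0, h1⟩ := hℓ _ (htrajX k) _ (huU k)
    have hbk0 := hb_nn k hk.le
    have hbk1 := hb_le1 k
    nlinarith [mul_le_mul_of_nonneg_left h1 hbk0]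
  -- sum of the discount factors
  have hsumb : ∑ k ∈ Finset.range N, b k = ((N : ℝ) + 1) / 2 := by
    have hid' : ∀ n : ℕ, ∑ k ∈ Finset.range n, (k : ℝ) = n * (n - 1) / 2 := by
      intro n
      induction n with
      | zero => simp
      | succ n ih => rw [Finset.sum_range_succ, ih]; push_cast; ring
    have hid := hid' N
    have : ∑ k ∈ Finset.range N, b k = ∑ k ∈ Finset.range N, ((N : ℝ) - k) / N := rfl
    rw [this, ← Finset.sum_div, Finset.sum_sub_distrib, Finset.sum_const,
      Finset.card_range, nsmul_eq_mul, hid]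
    field_simp
    ring
  -- the main cost bound
  have hJ : Jdisc f ℓ N x u ≤ ((N : ℝ) + 1) / 2 * ℓstar + M * (ℓmax - ℓstar) + ℓstar * p := by
    have hJeq : Jdisc f ℓ N x u = ∑ k ∈ Finset.range N, b k * ℓ (traj f x u k) (u k) := rfl
    rcases le_or_gt N M with hNM | hMN
    · -- short horizon: never reaches the orbit phase of the estimate
      have h1 : ∑ k ∈ Finset.range N, b k * ℓ (traj f x u k) (u k)
          ≤ ∑ k ∈ Finset.range N, (b k * ℓstar + (ℓmax - ℓstar)) :=
        Finset.sum_le_sum fun k hk => hterm k (Finset.mem_range.1 hk)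
      rw [Finset.sum_add_distrib, ← Finset.sum_mul, hsumb, Finset.sum_const,
        Finset.card_range, nsmul_eq_mul] at h1
      have hNM' : (N : ℝ) ≤ M := by exact_mod_cast hNM
      rw [hJeq]
      nlinarith
    · -- long horizon: split at `M`
      have hMN' : M ≤ N := hMN.le
      have hsplit : ∑ k ∈ Finset.range N, b k * ℓ (traj f x u k) (u k)
          = ∑ k ∈ Finset.range M, b k * ℓ (traj f x u k) (u k)
            + ∑ k ∈ Finset.range (N - M), b (M + k) * ℓ (traj f x u (M + k)) (u (M + k)) := by
        have h := Finset.sum_range_add (fun k => b k * ℓ (traj f x u k) (u k)) M (N - M)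
        rw [show M + (N - M) = N by omega] at h
        exact h
      have htail : ∀ k, b (M + k) * ℓ (traj f x u (M + k)) (u (M + k)) = b (M + k) * g k := by
        intro k
        have hu : u (M + k) = PiU (l + k) := by simp [hudef]
        rw [htrajM k, hu]
      have hkey := key_bound p hp ℓstar hstar0 g hg0 hgp hgsum b hb_mono
        (N - M) M (hb_nn M hMN') (fun k hk => hb_nn (M + k) (by omega))
      have h1 : ∑ k ∈ Finset.range M, b k * ℓ (traj f x u k) (u k)
          ≤ ∑ k ∈ Finset.range M, (b k * ℓstar + (ℓmax - ℓstar)) :=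
        Finset.sum_le_sum fun k hk => hterm k (by have := Finset.mem_range.1 hk; omega)
      rw [Finset.sum_add_distrib, ← Finset.sum_mul, Finset.sum_const,
        Finset.card_range, nsmul_eq_mul] at h1
      have h2 : ∑ k ∈ Finset.range (N - M), b (M + k) * ℓ (traj f x u (M + k)) (u (M + k))
          ≤ p * ℓstar * b M + ℓstar * ∑ k ∈ Finset.range (N - M), b (M + k) := by
        calc ∑ k ∈ Finset.range (N - M), b (M + k) * ℓ (traj f x u (M + k)) (u (M + k))
            = ∑ k ∈ Finset.range (N - M), b (M + k) * g k :=
              Finset.sum_congr rfl fun k _ => htail k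
          _ ≤ _ := hkey
      have hb_all : ∑ k ∈ Finset.range M, b k + ∑ k ∈ Finset.range (N - M), b (M + k)
          = ((N : ℝ) + 1) / 2 := by
        rw [← Finset.sum_range_add, show M + (N - M) = N by omega, hsumb]
      have h3 : p * ℓstar * b M ≤ ℓstar * p :=
        by nlinarith [hb_le1 M, hb_nn M hMN', mul_nonneg hppos.le hstar0]
      rw [hJeq, hsplit]
      nlinarith
  have hlamx : lam x ≤ lamBar := le_of_abs_le (hlam x hx)
  linarith
end
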